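/- Let H be an n×n real symmetric matrix with eigenvalues λ_1 ≤ ⋯ ≤ λ_n (counted with multiplicity) and corresponding orthonormal eigenvectors φ_1, …, φ_n, let 1 ≤ N < n, and assume λ_N < λ_{N+1}. Set P_∞ = Σ_{i=1}^N φ_iφ_iᵀ. If η > 0 and P_η ∈ C_N minimizes P ↦ tr(HP) + η⁻¹‖P‖₁ over C_N, then ‖P_η − P_∞‖_F² ≤ (2/η) · ‖P_∞‖₁ / (λ_{N+1} − λ_N). -/

import Mathlib

open Matrix BigOperators

/-- Entrywise ℓ¹ norm of a real matrix. -/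
noncomputable def l1Norm {n : ℕ} (P : Matrix (Fin n) (Fin n) ℝ) : ℝ :=
  ∑ i, ∑ j, |P i j|

/-- Square of the Frobenius norm of a real matrix. -/
noncomputable def frobSq {n : ℕ} (P : Matrix (Fin n) (Fin n) ℝ) : ℝ :=
  ∑ i, ∑ j, (P i j) ^ 2

/-- The convex set of admissible density matrices: symmetric, trace `N`,
with both `P` and `1 - P` positive semidefinite. -/
def CN (n N : ℕ) : Set (Matrix (Fin n) (Fin n) ℝ) :=
  {P | P.IsSymm ∧ P.trace = (N : ℝ) ∧ P.PosSemidef ∧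
    ((1 : Matrix (Fin n) (Fin n) ℝ) - P).PosSemidef}

/- Auxiliary lemmas -/

lemma psd_diag_nonneg {n : ℕ} {A : Matrix (Fin n) (Fin n) ℝ} (hA : A.PosSemidef)
    (i : Fin n) : 0 ≤ A i i := by
  have h := hA.diag_nonneg (i := i)
  simpa [dotProduct, mulVec, Pi.single_apply, Finset.sum_ite_eq, Finset.sum_ite_eq'] using h

lemma psd_trace_nonneg {n : ℕ} {A : Matrix (Fin n) (Fin n) ℝ} (hA : A.PosSemidef) :
    0 ≤ A.trace := by
  rw [Matrix.trace]
  exact Finset.sum_nonneg fun i _ => psd_diag_nonneg hA i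

lemma real_conjTranspose_eq_transpose {n : ℕ} (A : Matrix (Fin n) (Fin n) ℝ) :
    Aᴴ = Aᵀ := by
  ext i j; simp [Matrix.conjTranspose_apply]

lemma psd_trace_mul_nonneg {n : ℕ} {A B : Matrix (Fin n) (Fin n) ℝ}
    (hA : A.PosSemidef) (hB : B.PosSemidef) : 0 ≤ (A * B).trace := by
  obtain ⟨C, hC⟩ : ∃ C : Matrix (Fin n) (Fin n) ℝ, A = Cᴴ * C := by
    open scoped MatrixOrder in
    obtain ⟨C, hC⟩ := CStarAlgebra.nonneg_iff_eq_star_mul_self.mp hA.nonneg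
    exact ⟨C, by rw [hC, Matrix.star_eq_conjTranspose]⟩
  have hpsd : (C * B * Cᴴ).PosSemidef := hB.mul_mul_conjTranspose_same C
  have : (A * B).trace = (C * B * Cᴴ).trace := by
    rw [hC, Matrix.mul_assoc, Matrix.trace_mul_comm, Matrix.mul_assoc]
  rw [this]
  exact psd_trace_nonneg hpsd

lemma frobSq_eq_trace {n : ℕ} (A : Matrix (Fin n) (Fin n) ℝ) :
    frobSq A = (Aᵀ * A).trace := by
  rw [frobSq, Matrix.trace]
  rw [Finset.sum_comm]
  refine Finset.sum_congr rfl fun j _ => ?_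
  simp [Matrix.mul_apply, sq, Matrix.diag]

/-- Frobenius-norm approximation of the ℓ¹-regularized
minimizer at zero temperature:
`‖Pη − P∞‖_F² ≤ (2/η) ‖P∞‖₁ / (λ_{N+1} − λ_N)`. -/
theorem stmt2 {n N : ℕ} (hN1 : 1 ≤ N) (hNn : N < n)
    (H : Matrix (Fin n) (Fin n) ℝ) (hH : H.IsSymm)
    (lam : Fin n → ℝ) (hmono : Monotone lam)
    (φ : Fin n → Fin n → ℝ)
    (horth : ∀ i j, φ i ⬝ᵥ φ j = if i = j then (1 : ℝ) else 0)
    (heig : ∀ i, H.mulVec (φ i) = lam i • φ i)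
    (hgap : lam ⟨N - 1, by omega⟩ < lam ⟨N, hNn⟩)
    (Pinf : Matrix (Fin n) (Fin n) ℝ)
    (hPinf : Pinf = ∑ i ∈ Finset.univ.filter (fun i : Fin n => (i : ℕ) < N),
      vecMulVec (φ i) (φ i))
    (η : ℝ) (hη : 0 < η)
    (Pη : Matrix (Fin n) (Fin n) ℝ) (hPη : Pη ∈ CN n N)
    (hmin : ∀ P ∈ CN n N,
      (H * Pη).trace + η⁻¹ * l1Norm Pη ≤ (H * P).trace + η⁻¹ * l1Norm P) :
    frobSq (Pη - Pinf) ≤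
      (2 / η) * l1Norm Pinf / (lam ⟨N, hNn⟩ - lam ⟨N - 1, by omega⟩) := by
  classical
  set δ : ℝ := lam ⟨N, hNn⟩ - lam ⟨N - 1, by omega⟩ with hδdef
  have hδpos : 0 < δ := sub_pos.mpr hgap
  -- the orthogonal matrix of eigenvectors
  set U : Matrix (Fin n) (Fin n) ℝ := Matrix.of (fun i j => φ j i) with hUdef
  have hUtU : Uᵀ * U = 1 := by
    ext i j
    have h := horth i j
    simp only [Matrix.mul_apply, Matrix.transpose_apply, Matrix.one_apply, hUdef,
      Matrix.of_apply]
    rw [← h]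
    simp [dotProduct]
  have hUUt : U * Uᵀ = 1 := mul_eq_one_comm.mp hUtU
  have hUc : Uᴴ = Uᵀ := real_conjTranspose_eq_transpose U
  have hHU : H * U = U * Matrix.diagonal lam := by
    ext i j
    have h := congrFun (heig j) i
    simp only [Matrix.mulVec, dotProduct, Pi.smul_apply, smul_eq_mul] at h
    simp only [Matrix.mul_apply, hUdef, Matrix.of_apply]
    rw [h]
    have hterm : ∀ x : Fin n, φ x i * Matrix.diagonal lam x j
        = if x = j then lam j * φ j i else 0 := by
      intro x
      by_cases hx : x = j
      · subst hx; simp [Matrix.diagonal_apply]; ring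
      · simp [Matrix.diagonal_apply, hx]
    rw [Finset.sum_congr rfl fun x _ => hterm x, Finset.sum_ite_eq' Finset.univ j]
    simp
  have hHdiag : H = U * Matrix.diagonal lam * Uᵀ := by
    calc H = H * (U * Uᵀ) := by rw [hUUt, Matrix.mul_one]
    _ = H * U * Uᵀ := by rw [Matrix.mul_assoc]
    _ = U * Matrix.diagonal lam * Uᵀ := by rw [hHU]
  -- trace formula
  have htr : ∀ P : Matrix (Fin n) (Fin n) ℝ,
      (H * P).trace = ∑ i, lam i * (Uᵀ * P * U) i i := by
    intro P
    have h1 : (H * P).trace = (Matrix.diagonal lam * (Uᵀ * P * U)).trace := by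
      rw [hHdiag]
      have h2 : U * Matrix.diagonal lam * Uᵀ * P
          = U * (Matrix.diagonal lam * (Uᵀ * P)) := by
        simp [Matrix.mul_assoc]
      rw [h2, Matrix.trace_mul_comm, Matrix.mul_assoc]
    rw [h1, Matrix.trace]
    refine Finset.sum_congr rfl fun i _ => ?_
    simp [Matrix.diag, Matrix.diagonal_mul]
  -- the diagonal projector in the eigenbasis
  set d : Fin n → ℝ := fun i => if (i : ℕ) < N then (1 : ℝ) else 0 with hddef
  set D : Matrix (Fin n) (Fin n) ℝ := Matrix.diagonal d with hDdef
  have hsum_d : ∑ i, d i = (N : ℝ) := by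
    rw [hddef]
    rw [Fin.sum_univ_eq_sum_range (fun k => if k < N then (1 : ℝ) else 0)]
    rw [Finset.sum_ite, Finset.sum_const, Finset.sum_const]
    have : (Finset.range n).filter (fun k => k < N) = Finset.range N := by
      ext k; simp; omega
    simp [this]
  have hUDU : ∀ a b, (U * D * Uᵀ) a b = ∑ x, φ x a * d x * φ x b := by
    intro a b
    rw [Matrix.mul_apply]
    refine Finset.sum_congr rfl fun x _ => ?_
    rw [hDdef, Matrix.mul_diagonal]
    simp only [hUdef, Matrix.of_apply, Matrix.transpose_apply]
  have hPinfU : Pinf = U * D * Uᵀ := by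
    ext a b
    rw [hUDU, hPinf, Matrix.sum_apply, Finset.sum_filter]
    refine Finset.sum_congr rfl fun x _ => ?_
    by_cases h : (x : ℕ) < N <;> simp [hddef, h, Matrix.vecMulVec_apply]
  have hUtPinfU : Uᵀ * Pinf * U = D := by
    rw [hPinfU]
    calc Uᵀ * (U * D * Uᵀ) * U = (Uᵀ * U) * D * (Uᵀ * U) := by
          simp only [Matrix.mul_assoc]
    _ = D := by rw [hUtU, Matrix.one_mul, Matrix.mul_one]
  -- Pinf is in C_N
  have hDpsd : D.PosSemidef := by
    rw [hDdef]
    refine Matrix.posSemidef_diagonal_iff.mpr fun i => ?_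
    by_cases h : (i : ℕ) < N <;> simp [hddef, h]
  have h1Dpsd : ((1 : Matrix (Fin n) (Fin n) ℝ) - D).PosSemidef := by
    have : (1 : Matrix (Fin n) (Fin n) ℝ) - D = Matrix.diagonal (fun i => 1 - d i) := by
      rw [hDdef, ← Matrix.diagonal_one, Matrix.diagonal_sub]
    rw [this]
    refine Matrix.posSemidef_diagonal_iff.mpr fun i => ?_
    by_cases h : (i : ℕ) < N <;> simp [hddef, h]
  have hPinfCN : Pinf ∈ CN n N := by
    refine ⟨?_, ?_, ?_, ?_⟩
    · show Pinfᵀ = Pinf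
      rw [hPinfU]
      simp [Matrix.transpose_mul, Matrix.mul_assoc, hDdef, Matrix.diagonal_transpose]
    · rw [hPinfU, Matrix.trace_mul_cycle, hUtU, Matrix.one_mul, hDdef,
        Matrix.trace_diagonal, hsum_d]
    · have := hDpsd.mul_mul_conjTranspose_same U
      rwa [hUc, ← hPinfU] at this
    · have heq : (1 : Matrix (Fin n) (Fin n) ℝ) - Pinf
          = U * ((1 : Matrix (Fin n) (Fin n) ℝ) - D) * Uᵀ := by
        rw [Matrix.mul_sub, Matrix.sub_mul, Matrix.mul_one, hUUt, ← hPinfU]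
      have := h1Dpsd.mul_mul_conjTranspose_same U
      rwa [hUc, ← heq] at this
  -- conjugation machinery
  have hconjtr : ∀ A : Matrix (Fin n) (Fin n) ℝ, (Uᵀ * A * U).trace = A.trace := by
    intro A
    rw [Matrix.trace_mul_cycle, hUUt, Matrix.one_mul]
  have htransp : ∀ A : Matrix (Fin n) (Fin n) ℝ, (Uᵀ * A * U)ᵀ = Uᵀ * Aᵀ * U := by
    intro A
    rw [Matrix.transpose_mul, Matrix.transpose_mul, Matrix.transpose_transpose,
      ← Matrix.mul_assoc]
  have hconj : ∀ A B : Matrix (Fin n) (Fin n) ℝ,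
      (Uᵀ * A * U) * (Uᵀ * B * U) = Uᵀ * (A * B) * U := by
    intro A B
    calc (Uᵀ * A * U) * (Uᵀ * B * U) = Uᵀ * A * ((U * Uᵀ) * (B * U)) := by
          simp only [Matrix.mul_assoc]
    _ = Uᵀ * A * (B * U) := by rw [hUUt, Matrix.one_mul]
    _ = Uᵀ * (A * B) * U := by simp only [Matrix.mul_assoc]
  -- Q, the minimizer in the eigenbasis
  obtain ⟨hPsym, hPtr, hPpsd, hP1psd⟩ := hPη
  set Q : Matrix (Fin n) (Fin n) ℝ := Uᵀ * Pη * U with hQdef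
  have hQpsd : Q.PosSemidef := by
    have := hPpsd.conjTranspose_mul_mul_same U
    rwa [hUc] at this
  have h1Qeq : (1 : Matrix (Fin n) (Fin n) ℝ) - Q =
      Uᵀ * ((1 : Matrix (Fin n) (Fin n) ℝ) - Pη) * U := by
    rw [Matrix.mul_sub, Matrix.sub_mul, Matrix.mul_one, hUtU]
  have hQ1psd : ((1 : Matrix (Fin n) (Fin n) ℝ) - Q).PosSemidef := by
    rw [h1Qeq]
    have := hP1psd.conjTranspose_mul_mul_same U
    rwa [hUc] at this
  have hq0 : ∀ i, 0 ≤ Q i i := fun i => psd_diag_nonneg hQpsd i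
  have hq1 : ∀ i, Q i i ≤ 1 := by
    intro i
    have h := psd_diag_nonneg hQ1psd i
    have h2 : ((1 : Matrix (Fin n) (Fin n) ℝ) - Q) i i = 1 - Q i i := by
      simp [Matrix.sub_apply, Matrix.one_apply]
    rw [h2] at h
    linarith
  have hQtr : Q.trace = (N : ℝ) := by
    rw [hQdef, Matrix.trace_mul_cycle, hUUt, Matrix.one_mul, hPtr]
  have hQsym : Qᵀ = Q := by
    rw [hQdef, htransp, hPsym]
  have hDsym : Dᵀ = D := by
    rw [hDdef, Matrix.diagonal_transpose]
  -- trace (Q*Q) ≤ N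
  have hQQtr : (Q * Q).trace ≤ (N : ℝ) := by
    have h0 : 0 ≤ (Q * ((1 : Matrix (Fin n) (Fin n) ℝ) - Q)).trace :=
      psd_trace_mul_nonneg hQpsd hQ1psd
    rw [Matrix.mul_sub, Matrix.mul_one, Matrix.trace_sub] at h0
    linarith [hQtr]
  -- the two partial diagonal sums
  set T : ℝ := ∑ i ∈ Finset.univ.filter (fun i : Fin n => (i : ℕ) < N), Q i i with hTdef
  set S : ℝ := ∑ i ∈ Finset.univ.filter (fun i : Fin n => ¬ (i : ℕ) < N), Q i i with hSdef
  have hTS : T + S = (N : ℝ) := by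
    rw [hTdef, hSdef, Finset.sum_filter_add_sum_filter_not]
    simpa [Matrix.trace, Matrix.diag] using hQtr
  have hcard : ∑ _i ∈ Finset.univ.filter (fun i : Fin n => (i : ℕ) < N), (1 : ℝ)
      = (N : ℝ) := by
    rw [Finset.sum_filter, ← hsum_d]
  -- diagonal sums against D
  have hQD : (Q * D).trace = T := by
    rw [hTdef, Finset.sum_filter]
    show ∑ i, (Q * D).diag i = _
    refine Finset.sum_congr rfl fun i _ => ?_
    by_cases h : (i : ℕ) < N <;>
      simp [Matrix.diag_apply, hDdef, Matrix.mul_diagonal, hddef, h]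
  have hDQ : (D * Q).trace = T := by
    rw [Matrix.trace_mul_comm, hQD]
  have hDD : (D * D).trace = (N : ℝ) := by
    rw [← hsum_d]
    show ∑ i, (D * D).diag i = _
    refine Finset.sum_congr rfl fun i _ => ?_
    by_cases h : (i : ℕ) < N <;>
      simp [Matrix.diag_apply, hDdef, Matrix.mul_diagonal, Matrix.diagonal_apply_eq,
        hddef, h]
  -- Frobenius bound: frobSq (Q - D) ≤ 2 S
  have hfrobQD : frobSq (Q - D) ≤ 2 * S := by
    rw [frobSq_eq_trace]
    have hsub : (Q - D)ᵀ = Q - D := by rw [Matrix.transpose_sub, hQsym, hDsym]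
    rw [hsub]
    have hexp : (Q - D) * (Q - D) = Q * Q - Q * D - D * Q + D * D := by
      noncomm_ring
    rw [hexp, Matrix.trace_add, Matrix.trace_sub, Matrix.trace_sub, hQD, hDQ, hDD]
    linarith [hQQtr, hTS]
  have hfrob : frobSq (Pη - Pinf) = frobSq (Q - D) := by
    have hdiff : Uᵀ * (Pη - Pinf) * U = Q - D := by
      rw [Matrix.mul_sub, Matrix.sub_mul, hQdef, hUtPinfU]
    rw [frobSq_eq_trace, frobSq_eq_trace, ← hdiff, htransp, hconj, hconjtr]
  -- eigenvalue gap bound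
  have hkey : δ * S ≤ (∑ i, lam i * Q i i) - (∑ i, lam i * d i) := by
    rw [← Finset.sum_sub_distrib]
    rw [← Finset.sum_filter_add_sum_filter_not Finset.univ
      (fun i : Fin n => (i : ℕ) < N) (fun i => lam i * Q i i - lam i * d i)]
    have hA : ∑ i ∈ Finset.univ.filter (fun i : Fin n => (i : ℕ) < N),
        lam ⟨N - 1, by omega⟩ * (Q i i - 1)
        ≤ ∑ i ∈ Finset.univ.filter (fun i : Fin n => (i : ℕ) < N),
        (lam i * Q i i - lam i * d i) := by
      refine Finset.sum_le_sum fun i hi => ?_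
      simp only [Finset.mem_filter] at hi
      have hd1 : d i = 1 := by simp [hddef, hi.2]
      have hle : (i : Fin n) ≤ (⟨N - 1, by omega⟩ : Fin n) := by
        rw [Fin.le_def]; simp; omega
      have hlam : lam i ≤ lam ⟨N - 1, by omega⟩ := hmono hle
      have hql : Q i i - 1 ≤ 0 := by linarith [hq1 i]
      calc lam ⟨N - 1, by omega⟩ * (Q i i - 1)
          ≤ lam i * (Q i i - 1) := mul_le_mul_of_nonpos_right hlam hql
      _ = lam i * Q i i - lam i * d i := by rw [hd1]; ring
    have hB : ∑ i ∈ Finset.univ.filter (fun i : Fin n => ¬ (i : ℕ) < N),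
        lam ⟨N, hNn⟩ * Q i i
        ≤ ∑ i ∈ Finset.univ.filter (fun i : Fin n => ¬ (i : ℕ) < N),
        (lam i * Q i i - lam i * d i) := by
      refine Finset.sum_le_sum fun i hi => ?_
      simp only [Finset.mem_filter] at hi
      have hd0 : d i = 0 := by simp [hddef, hi.2]
      have hle : (⟨N, hNn⟩ : Fin n) ≤ i := by
        rw [Fin.le_def]; simp; omega
      have hlam : lam ⟨N, hNn⟩ ≤ lam i := hmono hle
      calc lam ⟨N, hNn⟩ * Q i i ≤ lam i * Q i i :=
            mul_le_mul_of_nonneg_right hlam (hq0 i)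
      _ = lam i * Q i i - lam i * d i := by rw [hd0]; ring
    have hAval : ∑ i ∈ Finset.univ.filter (fun i : Fin n => (i : ℕ) < N),
        lam ⟨N - 1, by omega⟩ * (Q i i - 1)
        = lam ⟨N - 1, by omega⟩ * (T - N) := by
      rw [← Finset.mul_sum, Finset.sum_sub_distrib, hcard, hTdef]
    have hBval : ∑ i ∈ Finset.univ.filter (fun i : Fin n => ¬ (i : ℕ) < N),
        lam ⟨N, hNn⟩ * Q i i = lam ⟨N, hNn⟩ * S := by
      rw [← Finset.mul_sum, hSdef]
    have hring : lam ⟨N - 1, by omega⟩ * (T - N) + lam ⟨N, hNn⟩ * S = δ * S := by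
      have hTN : T - N = -S := by linarith [hTS]
      rw [hTN, hδdef]; ring
    calc δ * S = lam ⟨N - 1, by omega⟩ * (T - N) + lam ⟨N, hNn⟩ * S := hring.symm
    _ ≤ _ := by
        rw [hAval] at hA
        rw [hBval] at hB
        exact add_le_add hA hB
  -- traces of H against Pη and Pinf
  have htrPη : (H * Pη).trace = ∑ i, lam i * Q i i := by
    rw [htr Pη, ← hQdef]
  have htrPinf : (H * Pinf).trace = ∑ i, lam i * d i := by
    rw [htr Pinf, hUtPinfU]
    refine Finset.sum_congr rfl fun i _ => ?_
    rw [hDdef, Matrix.diagonal_apply_eq]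
  -- minimality
  have hl1Pη : 0 ≤ l1Norm Pη := by
    refine Finset.sum_nonneg fun i _ => Finset.sum_nonneg fun j _ => abs_nonneg _
  have hminP := hmin Pinf hPinfCN
  have hbound : (∑ i, lam i * Q i i) - (∑ i, lam i * d i) ≤ η⁻¹ * l1Norm Pinf := by
    rw [← htrPη, ← htrPinf]
    have hinv : 0 ≤ η⁻¹ := le_of_lt (inv_pos.mpr hη)
    nlinarith [hminP, mul_nonneg hinv hl1Pη]
  -- combine
  have hS : S ≤ η⁻¹ * l1Norm Pinf / δ := by
    rw [le_div_iff₀ hδpos]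
    calc S * δ = δ * S := mul_comm _ _
    _ ≤ _ := le_trans hkey hbound
  calc frobSq (Pη - Pinf) = frobSq (Q - D) := hfrob
  _ ≤ 2 * S := hfrobQD
  _ ≤ 2 * (η⁻¹ * l1Norm Pinf / δ) := by linarith [hS]
  _ = (2 / η) * l1Norm Pinf / δ := by
      field_simp
  _ = (2 / η) * l1Norm Pinf / (lam ⟨N, hNn⟩ - lam ⟨N - 1, by omega⟩) := by
      rw [hδdef]
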